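/- Let l > 0 and define the Matérn-3/2 kernel K(s,t) = (1 + √3‖s-t‖/l)·exp(-√3‖s-t‖/l) on ℝ^n, the distance d(s,t)² = 2 - 2K(s,t), and the modified quantity d'(s,t)² = 2 - 2K'(s,t) where K'(s,t) = (1 + √3‖s-t‖/l)·(exp(-√3‖s-t‖/l) - 1/2). Then for all s, t, u: d(s,u)² ≤ d'(s,t)² + d'(t,u)² - 2. -/

import Mathlib

private lemma matern_aux1 {x : ℝ} (hx : 0 ≤ x) :
    (1 + x) * Real.exp (-x) ≤ 1 := by
  have h := Real.add_one_le_exp x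
  have he : 0 < Real.exp (-x) := Real.exp_pos _
  have : (1 + x) * Real.exp (-x) ≤ Real.exp x * Real.exp (-x) := by
    apply mul_le_mul_of_nonneg_right _ he.le
    linarith
  rwa [← Real.exp_add, add_neg_cancel, Real.exp_zero] at this

private lemma matern_aux2 {x : ℝ} (hx : 0 ≤ x) :
    1 - x / 2 ≤ (1 + x) * Real.exp (-x) := by
  -- equivalent to (2 - x) * exp x ≤ 2 + x
  have key : ∀ y : ℝ, 0 ≤ y → (2 - y) * Real.exp y ≤ 2 + y := by
    intro y hy
    set g : ℝ → ℝ := fun z => (2 + z) - (2 - z) * Real.exp z with hg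
    have hderiv : ∀ z : ℝ, HasDerivAt g (1 - (1 - z) * Real.exp z) z := by
      intro z
      have h1 : HasDerivAt (fun z : ℝ => 2 + z) 1 z := by
        simpa using (hasDerivAt_id z).const_add 2
      have h2 : HasDerivAt (fun z : ℝ => 2 - z) (-1) z := by
        simpa using (hasDerivAt_id z).const_sub 2
      have h3 : HasDerivAt (fun z : ℝ => (2 - z) * Real.exp z)
          ((-1) * Real.exp z + (2 - z) * Real.exp z) z :=
        h2.mul (Real.hasDerivAt_exp z)
      have := h1.sub h3
      rw [show (1 - (1 - z) * Real.exp z) = 1 - ((-1) * Real.exp z + (2 - z) * Real.exp z) by ring]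
      exact this
    have hmono : MonotoneOn g (Set.Ici (0:ℝ)) := by
      apply monotoneOn_of_deriv_nonneg (convex_Ici 0)
      · exact ((Continuous.sub (by continuity) (by continuity))).continuousOn
      · intro z _
        exact (hderiv z).differentiableAt.differentiableWithinAt
      · intro z hz
        rw [(hderiv z).deriv]
        have hz0 : 0 < z := by simpa using hz
        have h1 : (1 - z) ≤ Real.exp (-z) := by
          have := Real.add_one_le_exp (-z); linarith
        have h2 : (1 - z) * Real.exp z ≤ Real.exp (-z) * Real.exp z :=
          mul_le_mul_of_nonneg_right h1 (Real.exp_pos z).le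
        rw [← Real.exp_add, neg_add_cancel, Real.exp_zero] at h2
        linarith
    have h0 : g 0 = 0 := by simp [hg]
    have := hmono (Set.self_mem_Ici) (Set.mem_Ici.mpr hy) hy
    rw [h0] at this
    simp only [hg] at this
    linarith
  have h := key x hx
  have he : 0 < Real.exp x := Real.exp_pos x
  rw [Real.exp_neg, ← sub_nonneg]
  have heq : (1 + x) * (Real.exp x)⁻¹ - (1 - x / 2)
      = (((2 + x) - (2 - x) * Real.exp x) + x) / (2 * Real.exp x) := by
    field_simp
    ring
  rw [heq]
  apply div_nonneg _ (by positivity)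
  linarith

theorem matern_chaining_distance_bound (n : ℕ) (l : ℝ) (hl : 0 < l)
    (K K' : EuclideanSpace ℝ (Fin n) → EuclideanSpace ℝ (Fin n) → ℝ)
    (hK : ∀ s t, K s t =
      (1 + Real.sqrt 3 * ‖s - t‖ / l) * Real.exp (-(Real.sqrt 3 * ‖s - t‖ / l)))
    (hK' : ∀ s t, K' s t =
      (1 + Real.sqrt 3 * ‖s - t‖ / l) *
        (Real.exp (-(Real.sqrt 3 * ‖s - t‖ / l)) - 1 / 2))
    (d d' : EuclideanSpace ℝ (Fin n) → EuclideanSpace ℝ (Fin n) → ℝ)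
    (hd : ∀ s t, d s t ^ 2 = 2 - 2 * K s t)
    (hd' : ∀ s t, d' s t ^ 2 = 2 - 2 * K' s t) :
    ∀ s t u, d s u ^ 2 ≤ d' s t ^ 2 + d' t u ^ 2 - 2 := by
  intro s t u
  rw [hd, hd', hd', hK, hK', hK']
  set a := Real.sqrt 3 * ‖s - t‖ / l with ha
  set b := Real.sqrt 3 * ‖t - u‖ / l with hb
  set c := Real.sqrt 3 * ‖s - u‖ / l with hc
  have h3 : (0:ℝ) ≤ Real.sqrt 3 := Real.sqrt_nonneg 3
  have hna : 0 ≤ a := by positivity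
  have hnb : 0 ≤ b := by positivity
  have hnc : 0 ≤ c := by positivity
  have htri : c ≤ a + b := by
    rw [ha, hb, hc, ← add_div, div_le_div_iff_of_pos_right hl, ← mul_add]
    apply mul_le_mul_of_nonneg_left _ h3
    calc ‖s - u‖ = ‖(s - t) + (t - u)‖ := by abel_nf
    _ ≤ ‖s - t‖ + ‖t - u‖ := norm_add_le _ _
  have ha1 := matern_aux1 hna
  have hb1 := matern_aux1 hnb
  have hc2 := matern_aux2 hnc
  nlinarith [ha1, hb1, hc2, htri]
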